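/- With e(y,t) := errfn((y + at)/√(4βt)) − errfn((y − at)/√(4βt)), a ≠ 0, β > 0, there is for each p ∈ [1, ∞] a constant C such that ‖e_{ty}(·, t)‖_{L^p(ℝ)} ≤ C t^{-(1/2)(1 − 1/p) − 1/2} for all t > 0. -/

import Mathlib

open Real MeasureTheory
open scoped ENNReal

/-- The error-function primitive of the Gaussian. -/
noncomputable def errfn (x : ℝ) : ℝ :=
  (Real.sqrt Real.pi)⁻¹ * ∫ z in Set.Iic x, Real.exp (-(z ^ 2))

/-- The excited kernel `e(y,t)`. -/
noncomputable def eFn (a β y t : ℝ) : ℝ :=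
  errfn ((y + a * t) / Real.sqrt (4 * β * t)) - errfn ((y - a * t) / Real.sqrt (4 * β * t))

lemma integrable_G : Integrable (fun z : ℝ => Real.exp (-(z ^ 2))) := by
  simpa using integrable_exp_neg_mul_sq (b := 1) one_pos

lemma hasDerivAt_errfn (x : ℝ) :
    HasDerivAt errfn ((Real.sqrt Real.pi)⁻¹ * Real.exp (-(x ^ 2))) x := by
  have heq : ∀ w : ℝ, errfn w
      = (Real.sqrt Real.pi)⁻¹ * ((∫ z in Set.Iic 0, Real.exp (-(z ^ 2))) + ∫ z in (0:ℝ)..w, Real.exp (-(z ^ 2))) := by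
    intro w
    unfold errfn
    rw [← intervalIntegral.integral_Iic_sub_Iic (f := fun z : ℝ => Real.exp (-(z ^ 2)))
      (integrable_G.integrableOn) (integrable_G.integrableOn) (a := 0) (b := w)]
    ring
  have h1 : HasDerivAt (fun w => ∫ z in (0:ℝ)..w, Real.exp (-(z ^ 2))) (Real.exp (-(x ^ 2))) x := by
    exact intervalIntegral.integral_hasDerivAt_right
      ((Real.continuous_exp.comp (by continuity)).intervalIntegrable _ _)
      ((Real.continuous_exp.comp (by continuity)).stronglyMeasurableAtFilter _ _)
      (Real.continuous_exp.comp (by continuity)).continuousAt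
  have h2 := ((h1.const_add (∫ z in Set.Iic 0, Real.exp (-(z ^ 2)))).const_mul (Real.sqrt Real.pi)⁻¹)
  have h3 : (fun w => (Real.sqrt Real.pi)⁻¹ * ((∫ z in Set.Iic 0, Real.exp (-(z ^ 2))) + ∫ z in (0:ℝ)..w, Real.exp (-(z ^ 2)))) = errfn := by
    funext w; rw [heq w]
  rwa [h3] at h2

noncomputable def Gp (x : ℝ) : ℝ := -2*x*Real.exp (-(x^2))
noncomputable def Wf (x : ℝ) : ℝ := (1 - 2*x^2) * Real.exp (-(x^2))
noncomputable def Wp (x : ℝ) : ℝ := (4*x^3 - 6*x) * Real.exp (-(x^2))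

lemma hasDerivAt_G (x : ℝ) : HasDerivAt (fun x : ℝ => Real.exp (-(x^2))) (Gp x) x := by
  have h1 : HasDerivAt (fun x : ℝ => -(x^2)) (-(2*x)) x := by
    simpa using ((hasDerivAt_pow 2 x)).fun_neg
  have := (Real.hasDerivAt_exp (-(x^2))).comp x h1
  simpa [Gp, mul_comm, mul_assoc, mul_left_comm, Function.comp_def] using this

lemma hasDerivAt_W (x : ℝ) : HasDerivAt Wf (Wp x) x := by
  have h1 : HasDerivAt (fun x : ℝ => 1 - 2*x^2) (-(4*x)) x := by
    have h := (((hasDerivAt_pow 2 x)).const_mul 2).const_sub 1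
    convert! h using 1
    push_cast; ring
  have := h1.fun_mul (hasDerivAt_G x)
  have h2 : (fun x : ℝ => (1-2*x^2) * Real.exp (-(x^2))) = Wf := rfl
  rw [h2] at this
  convert! this using 1
  unfold Gp Wp; ring

noncomputable def hh (a β y t : ℝ) : ℝ :=
  (Real.sqrt Real.pi)⁻¹ * (Real.sqrt (4*β))⁻¹ *
    ( -(1/(2*t*Real.sqrt t)) * (Wf ((y + a*t)/(Real.sqrt (4*β)*Real.sqrt t)) - Wf ((y - a*t)/(Real.sqrt (4*β)*Real.sqrt t)))
      + (a/(Real.sqrt (4*β)*t)) * (Gp ((y + a*t)/(Real.sqrt (4*β)*Real.sqrt t)) + Gp ((y - a*t)/(Real.sqrt (4*β)*Real.sqrt t))) )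

lemma inner_deriv (a β : ℝ) (hβ : 0 < β) {s : ℝ} (hs : 0 < s) (y : ℝ) :
    deriv (fun z => eFn a β z s) y =
      (Real.sqrt Real.pi)⁻¹ * (Real.sqrt (4*β) * Real.sqrt s)⁻¹ *
        (Real.exp (-(((y + a*s)/(Real.sqrt (4*β) * Real.sqrt s))^2))
          - Real.exp (-(((y - a*s)/(Real.sqrt (4*β) * Real.sqrt s))^2))) := by
  have hσ : Real.sqrt (4*β*s) = Real.sqrt (4*β) * Real.sqrt s := by
    rw [← Real.sqrt_mul (by positivity)]
  have hσ0 : Real.sqrt (4*β) * Real.sqrt s ≠ 0 := by positivity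
  have h1 : HasDerivAt (fun z => (z + a*s)/(Real.sqrt (4*β) * Real.sqrt s))
      (1/(Real.sqrt (4*β) * Real.sqrt s)) y := by
    simpa using ((hasDerivAt_id y).add_const (a*s)).div_const (Real.sqrt (4*β) * Real.sqrt s)
  have h2 : HasDerivAt (fun z => (z - a*s)/(Real.sqrt (4*β) * Real.sqrt s))
      (1/(Real.sqrt (4*β) * Real.sqrt s)) y := by
    simpa using ((hasDerivAt_id y).sub_const (a*s)).div_const (Real.sqrt (4*β) * Real.sqrt s)
  have hp := (hasDerivAt_errfn ((y + a*s)/(Real.sqrt (4*β) * Real.sqrt s))).comp y h1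
  have hm := (hasDerivAt_errfn ((y - a*s)/(Real.sqrt (4*β) * Real.sqrt s))).comp y h2
  have heF : (fun z => eFn a β z s) = fun z =>
      errfn ((z + a*s)/(Real.sqrt (4*β) * Real.sqrt s)) - errfn ((z - a*s)/(Real.sqrt (4*β) * Real.sqrt s)) := by
    funext z; unfold eFn; rw [hσ]
  have hd := (hp.fun_sub hm).deriv
  simp only [Function.comp_def] at hd
  rw [heF, hd]
  ring

lemma hasDerivAt_g (a β y : ℝ) (hβ : 0 < β) {t : ℝ} (ht : 0 < t) :
    HasDerivAt (fun s => (Real.sqrt Real.pi)⁻¹ * (Real.sqrt (4*β) * Real.sqrt s)⁻¹ *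
        (Real.exp (-(((y + a*s)/(Real.sqrt (4*β) * Real.sqrt s))^2))
          - Real.exp (-(((y - a*s)/(Real.sqrt (4*β) * Real.sqrt s))^2))))
      (hh a β y t) t := by
  have hc : (0:ℝ) < Real.sqrt (4*β) := Real.sqrt_pos.2 (by positivity)
  have hst : (0:ℝ) < Real.sqrt t := Real.sqrt_pos.2 ht
  have hcs0 : Real.sqrt (4*β) * Real.sqrt t ≠ 0 := by positivity
  have hsqrt : HasDerivAt (fun s : ℝ => Real.sqrt s) (1/(2*Real.sqrt t)) t :=
    Real.hasDerivAt_sqrt ht.ne'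
  have hcs : HasDerivAt (fun s : ℝ => Real.sqrt (4*β) * Real.sqrt s)
      (Real.sqrt (4*β) * (1/(2*Real.sqrt t))) t := hsqrt.const_mul _
  have hnp : HasDerivAt (fun s : ℝ => y + a*s) a t := by
    simpa using ((hasDerivAt_id t).const_mul a).const_add y
  have hnm : HasDerivAt (fun s : ℝ => y - a*s) (-a) t := by
    simpa using ((hasDerivAt_id t).const_mul a).const_sub y
  have hup := hnp.fun_div hcs hcs0
  have hum := hnm.fun_div hcs hcs0
  have hEp := (hasDerivAt_G ((y + a*t)/(Real.sqrt (4*β) * Real.sqrt t))).comp t hup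
  have hEm := (hasDerivAt_G ((y - a*t)/(Real.sqrt (4*β) * Real.sqrt t))).comp t hum
  have hinv : HasDerivAt (fun s : ℝ => (Real.sqrt (4*β) * Real.sqrt s)⁻¹)
      (-(Real.sqrt (4*β) * (1/(2*Real.sqrt t))) / (Real.sqrt (4*β) * Real.sqrt t)^2) t :=
    hcs.inv hcs0
  have hmul := (hinv.const_mul (Real.sqrt Real.pi)⁻¹).fun_mul (hEp.fun_sub hEm)
  simp only [Function.comp_def] at hmul
  convert! hmul using 1
  set st := Real.sqrt t with hstdef
  have h2 : st^2 = t := Real.sq_sqrt ht.le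
  unfold hh Wf Gp
  rw [← h2]
  rw [Real.sqrt_sq hst.le]
  have hπ : Real.sqrt Real.pi ≠ 0 := by positivity
  field_simp
  ring

lemma key_deriv (a β y : ℝ) (hβ : 0 < β) {t : ℝ} (ht : 0 < t) :
    deriv (fun s => deriv (fun z => eFn a β z s) y) t = hh a β y t := by
  have hev : (fun s => deriv (fun z => eFn a β z s) y) =ᶠ[nhds t]
      (fun s => (Real.sqrt Real.pi)⁻¹ * (Real.sqrt (4*β) * Real.sqrt s)⁻¹ *
        (Real.exp (-(((y + a*s)/(Real.sqrt (4*β) * Real.sqrt s))^2))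
          - Real.exp (-(((y - a*s)/(Real.sqrt (4*β) * Real.sqrt s))^2)))) := by
    filter_upwards [isOpen_Ioi.mem_nhds (Set.mem_Ioi.2 ht)] with s hs
    exact inner_deriv a β hβ hs y
  rw [hev.deriv_eq]
  exact (hasDerivAt_g a β y hβ ht).deriv

lemma abs_exp_half (x : ℝ) : |x| * Real.exp (-(x^2)) ≤ Real.exp (-(x^2)/2) := by
  have h1 : |x| ≤ Real.exp (x^2/2) := by
    have h := Real.add_one_le_exp (x^2/2)
    nlinarith [sq_abs x, sq_nonneg (|x| - 1)]
  calc |x| * Real.exp (-(x^2)) ≤ Real.exp (x^2/2) * Real.exp (-(x^2)) := by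
        exact mul_le_mul_of_nonneg_right h1 (Real.exp_pos _).le
    _ = Real.exp (-(x^2)/2) := by rw [← Real.exp_add]; ring_nf

lemma abs_cube_exp (x : ℝ) : |x|^3 * Real.exp (-(x^2)) ≤ 3 * Real.exp (-(x^2)/2) := by
  have h1 : |x|^3 ≤ 3 * Real.exp (x^2/2) := by
    have h6 : 1 + x^2/6 ≤ Real.exp (x^2/6) := by
      have := Real.add_one_le_exp (x^2/6); linarith
    have hpos : (0:ℝ) ≤ 1 + x^2/6 := by positivity
    have hcube : (1 + x^2/6)^3 ≤ Real.exp (x^2/6)^3 := by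
      exact pow_le_pow_left₀ hpos h6 3
    have hexp3 : Real.exp (x^2/6)^3 = Real.exp (x^2/2) := by
      rw [← Real.exp_nat_mul]; congr 1; push_cast; ring
    have habs : |x|^3 ≤ 3 * (1 + x^2/6)^3 := by
      nlinarith [sq_nonneg (|x|^3 - 6*|x|), sq_nonneg (3*x^2 - 6*|x|), sq_abs x,
        sq_nonneg x, abs_nonneg x]
    calc |x|^3 ≤ 3 * (1 + x^2/6)^3 := habs
      _ ≤ 3 * Real.exp (x^2/6)^3 := by nlinarith
      _ = 3 * Real.exp (x^2/2) := by rw [hexp3]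
  calc |x|^3 * Real.exp (-(x^2)) ≤ 3 * Real.exp (x^2/2) * Real.exp (-(x^2)) := by
        exact mul_le_mul_of_nonneg_right h1 (Real.exp_pos _).le
    _ = 3 * Real.exp (-(x^2)/2) := by rw [mul_assoc, ← Real.exp_add]; ring_nf

lemma abs_Gp_le (x : ℝ) : |Gp x| ≤ 2 * Real.exp (-(x^2)/2) := by
  unfold Gp
  have : |(-2*x*Real.exp (-(x^2)))| = 2 * (|x| * Real.exp (-(x^2))) := by
    rw [abs_mul, abs_mul]
    simp [abs_of_nonneg (Real.exp_pos (-(x^2))).le]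
    ring
  rw [this]
  nlinarith [abs_exp_half x]

lemma abs_Wp_le (x : ℝ) : |Wp x| ≤ 18 * Real.exp (-(x^2)/2) := by
  unfold Wp
  have h0 : |(4*x^3 - 6*x) * Real.exp (-(x^2))| ≤ (4*|x|^3 + 6*|x|) * Real.exp (-(x^2)) := by
    rw [abs_mul, abs_of_nonneg (Real.exp_pos (-(x^2))).le]
    have : |4*x^3 - 6*x| ≤ 4*|x|^3 + 6*|x| := by
      calc |4*x^3 - 6*x| ≤ |4*x^3| + |6*x| := abs_sub _ _
        _ = 4*|x|^3 + 6*|x| := by rw [abs_mul, abs_mul, abs_pow]; norm_num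
    exact mul_le_mul_of_nonneg_right this (Real.exp_pos _).le
  refine h0.trans ?_
  have := abs_cube_exp x
  have := abs_exp_half x
  nlinarith [Real.exp_pos (-(x^2)), Real.exp_pos (-(x^2)/2)]

lemma abs_Gp_le' (x : ℝ) : |Gp x| ≤ 2 :=
  (abs_Gp_le x).trans (by nlinarith [Real.exp_le_one_iff.2 (by nlinarith [sq_nonneg x] : -(x^2)/2 ≤ 0)])

lemma abs_Wp_le' (x : ℝ) : |Wp x| ≤ 18 :=
  (abs_Wp_le x).trans (by nlinarith [Real.exp_le_one_iff.2 (by nlinarith [sq_nonneg x] : -(x^2)/2 ≤ 0)])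

lemma integrable_exp_half : Integrable (fun x : ℝ => Real.exp (-(x^2)/2)) := by
  have h := integrable_exp_neg_mul_sq (by norm_num : (0:ℝ) < 1/2)
  have : (fun x : ℝ => Real.exp (-(1/2) * x^2)) = (fun x : ℝ => Real.exp (-(x^2)/2)) := by
    funext x; congr 1; ring
  rwa [← this]

lemma continuous_Wp : Continuous Wp := by
  unfold Wp; fun_prop

lemma continuous_Gp : Continuous Gp := by
  unfold Gp; fun_prop

lemma integrable_abs_Wp : Integrable (fun x => |Wp x|) := by
  refine (integrable_exp_half.const_mul 18).mono ?_ ?_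
  · exact (continuous_Wp.abs).aestronglyMeasurable
  · refine Filter.Eventually.of_forall fun x => ?_
    rw [norm_eq_abs, norm_eq_abs, abs_abs]
    exact (abs_Wp_le x).trans (le_abs_self _)

lemma integrable_abs_Gp : Integrable (fun x => |Gp x|) := by
  refine (integrable_exp_half.const_mul 2).mono ?_ ?_
  · exact (continuous_Gp.abs).aestronglyMeasurable
  · refine Filter.Eventually.of_forall fun x => ?_
    rw [norm_eq_abs, norm_eq_abs, abs_abs]
    exact (abs_Gp_le x).trans (le_abs_self _)

lemma Wf_diff_le {lo hi : ℝ} (h : lo ≤ hi) : |Wf hi - Wf lo| ≤ ∫ v in Set.Ioc lo hi, |Wp v| := by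
  have hint : IntervalIntegrable Wp volume lo hi := continuous_Wp.intervalIntegrable _ _
  have heq : ∫ v in lo..hi, Wp v = Wf hi - Wf lo :=
    intervalIntegral.integral_eq_sub_of_hasDerivAt (fun x _ => hasDerivAt_W x) hint
  rw [← heq, ← intervalIntegral.integral_of_le h]
  exact intervalIntegral.abs_integral_le_integral_abs h

lemma Wf_diff_le' (x y : ℝ) : |Wf y - Wf x| ≤ 18 * |y - x| := by
  have h := Convex.norm_image_sub_le_of_norm_deriv_le (f := Wf) (s := Set.univ)
    (fun z _ => (hasDerivAt_W z).differentiableAt)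
    (fun z _ => by rw [(hasDerivAt_W z).deriv]; exact abs_Wp_le' z)
    convex_univ (Set.mem_univ x) (Set.mem_univ y)
  rw [Real.norm_eq_abs, Real.norm_eq_abs] at h
  rw [abs_sub_comm] at h ⊢
  exact h

lemma shift_lintegral (F : ℝ → ℝ) (hFc : Continuous F) (hF0 : ∀ x, 0 ≤ F x) (hFi : Integrable F)
    {s' h' : ℝ} (hs' : 0 < s') (hh' : 0 < h') :
    ∫⁻ y : ℝ, ENNReal.ofReal (∫ v in Set.Ioc ((y - h')/s') ((y + h')/s'), F v)
      = ENNReal.ofReal (2*h') * ENNReal.ofReal (∫ v, F v) := by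
  have hiff : ∀ y v : ℝ, (v ∈ Set.Ioc ((y - h')/s') ((y + h')/s'))
      ↔ (y ∈ Set.Ico (v*s' - h') (v*s' + h')) := by
    intro y v
    rw [Set.mem_Ioc, Set.mem_Ico, div_lt_iff₀ hs', le_div_iff₀ hs']
    constructor <;> (rintro ⟨h1, h2⟩; constructor <;> linarith)
  calc ∫⁻ y : ℝ, ENNReal.ofReal (∫ v in Set.Ioc ((y - h')/s') ((y + h')/s'), F v)
      = ∫⁻ y : ℝ, ∫⁻ v : ℝ,
          Set.indicator (Set.Ico (v*s' - h') (v*s' + h')) (fun _ => ENNReal.ofReal (F v)) y := by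
        refine lintegral_congr fun y => ?_
        rw [ofReal_integral_eq_lintegral_ofReal hFi.integrableOn
          (Filter.Eventually.of_forall fun v => hF0 v),
          ← lintegral_indicator measurableSet_Ioc]
        refine lintegral_congr fun v => ?_
        simp only [Set.indicator_apply]
        rw [if_congr (hiff y v) rfl rfl]
    _ = ∫⁻ v : ℝ, ∫⁻ y : ℝ,
          Set.indicator (Set.Ico (v*s' - h') (v*s' + h')) (fun _ => ENNReal.ofReal (F v)) y := by
        refine lintegral_lintegral_swap ?_
        have heq : (Function.uncurry fun y v =>
            Set.indicator (Set.Ico (v*s' - h') (v*s' + h')) (fun _ => ENNReal.ofReal (F v)) y)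
            = Set.indicator {p : ℝ × ℝ | p.2*s' - h' ≤ p.1 ∧ p.1 < p.2*s' + h'}
                (fun p => ENNReal.ofReal (F p.2)) := by
          funext p
          simp [Function.uncurry, Set.indicator_apply, Set.mem_Ico, Set.mem_setOf_eq]
        rw [heq]
        refine (Measurable.indicator ?_ ?_).aemeasurable
        · exact (hFc.measurable.comp measurable_snd).ennreal_ofReal
        · have h1 : MeasurableSet {p : ℝ × ℝ | p.2*s' - h' ≤ p.1} :=
            measurableSet_le (by fun_prop) (by fun_prop)
          have h2 : MeasurableSet {p : ℝ × ℝ | p.1 < p.2*s' + h'} :=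
            measurableSet_lt (by fun_prop) (by fun_prop)
          exact h1.inter h2
    _ = ∫⁻ v : ℝ, ENNReal.ofReal (F v) * ENNReal.ofReal (2*h') := by
        refine lintegral_congr fun v => ?_
        rw [lintegral_indicator measurableSet_Ico, setLIntegral_const, Real.volume_Ico]
        congr 1
        ring_nf
    _ = ENNReal.ofReal (2*h') * ENNReal.ofReal (∫ v, F v) := by
        rw [lintegral_mul_const' _ _ ENNReal.ofReal_ne_top,
          ofReal_integral_eq_lintegral_ofReal hFi (Filter.Eventually.of_forall hF0), mul_comm]

lemma hh_abs_le (a β : ℝ) (hβ : 0 < β) {t : ℝ} (ht : 0 < t) (y : ℝ) :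
    |hh a β y t| ≤ (Real.sqrt Real.pi)⁻¹ * (Real.sqrt (4*β))⁻¹ * (22 * |a| / Real.sqrt (4*β)) / t := by
  have hc : (0:ℝ) < Real.sqrt (4*β) := Real.sqrt_pos.2 (by positivity)
  have hπ : (0:ℝ) < Real.sqrt Real.pi := Real.sqrt_pos.2 Real.pi_pos
  set st := Real.sqrt t with hstdef
  have hst : (0:ℝ) < st := Real.sqrt_pos.2 ht
  have h2 : st^2 = t := Real.sq_sqrt ht.le
  set c := Real.sqrt (4*β) with hcdef
  set up := (y + a*t)/(c*st) with hup
  set um := (y - a*t)/(c*st) with hum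
  have hA : |Wf up - Wf um| ≤ 18 * (2 * |a| * t / (c*st)) := by
    have h1 := Wf_diff_le' um up
    have hd : up - um = 2*a*t/(c*st) := by
      rw [hup, hum]; field_simp; ring
    have : |up - um| = 2 * |a| * t / (c*st) := by
      rw [hd, abs_div, abs_of_pos (by positivity : (0:ℝ) < c*st)]
      congr 1
      rw [abs_mul, abs_mul, abs_of_pos ht]
      norm_num
    rw [this] at h1
    exact h1
  have hB : |Gp up + Gp um| ≤ 4 :=
    (abs_add_le _ _).trans (by linarith [abs_Gp_le' up, abs_Gp_le' um])
  have hmain : |hh a β y t| ≤ ((Real.sqrt Real.pi)⁻¹ * c⁻¹) *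
      ((1/(2*t*st)) * (18 * (2 * |a| * t / (c*st))) + (|a|/(c*t)) * 4) := by
    unfold hh
    rw [abs_mul]
    have he1 : |(Real.sqrt Real.pi)⁻¹ * c⁻¹| = (Real.sqrt Real.pi)⁻¹ * c⁻¹ :=
      abs_of_pos (by positivity)
    rw [he1]
    refine mul_le_mul_of_nonneg_left ?_ (by positivity)
    refine (abs_add_le _ _).trans ?_
    have e1 : |(-(1/(2*t*st))) * (Wf up - Wf um)| = (1/(2*t*st)) * |Wf up - Wf um| := by
      rw [abs_mul, abs_neg, abs_of_pos (by positivity : (0:ℝ) < 1/(2*t*st))]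
    have e2 : |(a/(c*t)) * (Gp up + Gp um)| = (|a|/(c*t)) * |Gp up + Gp um| := by
      rw [abs_mul, abs_div, abs_of_pos (by positivity : (0:ℝ) < c*t)]
    rw [e1, e2]
    have := mul_le_mul_of_nonneg_left hA (by positivity : (0:ℝ) ≤ 1/(2*t*st))
    have := mul_le_mul_of_nonneg_left hB (by positivity : (0:ℝ) ≤ |a|/(c*t))
    linarith
  refine hmain.trans (le_of_eq ?_)
  rw [← h2]
  field_simp
  ring

lemma hh_split (a β y t : ℝ) (hβ : 0 < β) (ht : 0 < t) :
    |hh a β y t| ≤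
      ((Real.sqrt Real.pi)⁻¹ * (Real.sqrt (4*β))⁻¹ * (1/(2*t*Real.sqrt t)))
        * |Wf ((y + a*t)/(Real.sqrt (4*β)*Real.sqrt t)) - Wf ((y - a*t)/(Real.sqrt (4*β)*Real.sqrt t))|
      + ((Real.sqrt Real.pi)⁻¹ * (Real.sqrt (4*β))⁻¹ * (|a|/(Real.sqrt (4*β)*t)))
        * (|Gp ((y + a*t)/(Real.sqrt (4*β)*Real.sqrt t))| + |Gp ((y - a*t)/(Real.sqrt (4*β)*Real.sqrt t))|) := by
  have hc : (0:ℝ) < Real.sqrt (4*β) := Real.sqrt_pos.2 (by positivity)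
  have hπ : (0:ℝ) < Real.sqrt Real.pi := Real.sqrt_pos.2 Real.pi_pos
  have hst : (0:ℝ) < Real.sqrt t := Real.sqrt_pos.2 ht
  unfold hh
  set A := Wf ((y + a*t)/(Real.sqrt (4*β)*Real.sqrt t)) - Wf ((y - a*t)/(Real.sqrt (4*β)*Real.sqrt t)) with hA
  set B1 := Gp ((y + a*t)/(Real.sqrt (4*β)*Real.sqrt t)) with hB1
  set B2 := Gp ((y - a*t)/(Real.sqrt (4*β)*Real.sqrt t)) with hB2
  rw [abs_mul, abs_of_pos (by positivity : (0:ℝ) < (Real.sqrt Real.pi)⁻¹ * (Real.sqrt (4*β))⁻¹)]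
  have h1 : |(-(1/(2*t*Real.sqrt t))) * A + (a/(Real.sqrt (4*β)*t)) * (B1 + B2)|
      ≤ (1/(2*t*Real.sqrt t)) * |A| + (|a|/(Real.sqrt (4*β)*t)) * (|B1| + |B2|) := by
    refine (abs_add_le _ _).trans ?_
    rw [abs_mul, abs_mul, abs_neg, abs_of_pos (by positivity : (0:ℝ) < 1/(2*t*Real.sqrt t)),
      abs_div, abs_of_pos (by positivity : (0:ℝ) < Real.sqrt (4*β)*t)]
    gcongr
    exact abs_add_le _ _
  refine (mul_le_mul_of_nonneg_left h1 (by positivity)).trans (le_of_eq ?_)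
  ring

lemma hh_l1 (a β : ℝ) (ha : a ≠ 0) (hβ : 0 < β) {t : ℝ} (ht : 0 < t) :
    ∫⁻ y : ℝ, ENNReal.ofReal |hh a β y t|
      ≤ ENNReal.ofReal (((Real.sqrt Real.pi)⁻¹ * (Real.sqrt (4*β))⁻¹ * |a| *
          ((∫ v, |Wp v|) + 2 * (∫ v, |Gp v|))) / Real.sqrt t) := by
  have hc : (0:ℝ) < Real.sqrt (4*β) := Real.sqrt_pos.2 (by positivity)
  have hπ : (0:ℝ) < Real.sqrt Real.pi := Real.sqrt_pos.2 Real.pi_pos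
  have hst : (0:ℝ) < Real.sqrt t := Real.sqrt_pos.2 ht
  have h2 : Real.sqrt t^2 = t := Real.sq_sqrt ht.le
  have ha' : (0:ℝ) < |a| := abs_pos.2 ha
  have hs' : (0:ℝ) < Real.sqrt (4*β) * Real.sqrt t := by positivity
  have hh' : (0:ℝ) < |a| * t := by positivity
  -- the W-difference is bounded by the Ioc integral of |Wp|
  have hWd : ∀ y : ℝ, |Wf ((y + a*t)/(Real.sqrt (4*β)*Real.sqrt t))
        - Wf ((y - a*t)/(Real.sqrt (4*β)*Real.sqrt t))|
      ≤ ∫ v in Set.Ioc ((y - |a| * t)/(Real.sqrt (4*β)*Real.sqrt t))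
          ((y + |a| * t)/(Real.sqrt (4*β)*Real.sqrt t)), |Wp v| := by
    intro y
    rcases lt_or_gt_of_ne ha with hneg | hpos
    · have e1 : (y + a*t)/(Real.sqrt (4*β)*Real.sqrt t) = (y - |a| * t)/(Real.sqrt (4*β)*Real.sqrt t) := by
        rw [abs_of_neg hneg]; ring_nf
      have e2 : (y - a*t)/(Real.sqrt (4*β)*Real.sqrt t) = (y + |a| * t)/(Real.sqrt (4*β)*Real.sqrt t) := by
        rw [abs_of_neg hneg]; ring_nf
      rw [e1, e2, abs_sub_comm]
      refine Wf_diff_le ?_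
      gcongr
      nlinarith
    · have e1 : (y + a*t)/(Real.sqrt (4*β)*Real.sqrt t) = (y + |a| * t)/(Real.sqrt (4*β)*Real.sqrt t) := by
        rw [abs_of_pos hpos]
      have e2 : (y - a*t)/(Real.sqrt (4*β)*Real.sqrt t) = (y - |a| * t)/(Real.sqrt (4*β)*Real.sqrt t) := by
        rw [abs_of_pos hpos]
      rw [e1, e2]
      refine Wf_diff_le ?_
      gcongr
      nlinarith
  -- pointwise bound
  have hpt : ∀ y : ℝ, |hh a β y t| ≤
      ((Real.sqrt Real.pi)⁻¹ * (Real.sqrt (4*β))⁻¹ * (1/(2*t*Real.sqrt t)))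
        * (∫ v in Set.Ioc ((y - |a| * t)/(Real.sqrt (4*β)*Real.sqrt t))
            ((y + |a| * t)/(Real.sqrt (4*β)*Real.sqrt t)), |Wp v|)
      + ((Real.sqrt Real.pi)⁻¹ * (Real.sqrt (4*β))⁻¹ * (|a|/(Real.sqrt (4*β)*t)))
        * (|Gp ((y + a*t)/(Real.sqrt (4*β)*Real.sqrt t))| + |Gp ((y - a*t)/(Real.sqrt (4*β)*Real.sqrt t))|) := by
    intro y
    refine (hh_split a β y t hβ ht).trans ?_
    gcongr
    exact hWd y
  -- split the lintegral
  have hmeas1 : Measurable (fun y : ℝ => ENNReal.ofReal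
      (((Real.sqrt Real.pi)⁻¹ * (Real.sqrt (4*β))⁻¹ * (1/(2*t*Real.sqrt t)))
        * (∫ v in Set.Ioc ((y - |a| * t)/(Real.sqrt (4*β)*Real.sqrt t))
            ((y + |a| * t)/(Real.sqrt (4*β)*Real.sqrt t)), |Wp v|))) := by
    have hΦ : Monotone (fun x : ℝ => ∫ v in Set.Iic x, |Wp v|) := by
      intro x₁ x₂ hx
      refine setIntegral_mono_set integrable_abs_Wp.integrableOn
        (Filter.Eventually.of_forall fun v => abs_nonneg _) (HasSubset.Subset.eventuallyLE ?_)
      exact Set.Iic_subset_Iic.2 hx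
    have hrw : ∀ y : ℝ, (∫ v in Set.Ioc ((y - |a| * t)/(Real.sqrt (4*β)*Real.sqrt t))
            ((y + |a| * t)/(Real.sqrt (4*β)*Real.sqrt t)), |Wp v|)
        = (fun x : ℝ => ∫ v in Set.Iic x, |Wp v|) ((y + |a| * t)/(Real.sqrt (4*β)*Real.sqrt t))
          - (fun x : ℝ => ∫ v in Set.Iic x, |Wp v|) ((y - |a| * t)/(Real.sqrt (4*β)*Real.sqrt t)) := by
      intro y
      rw [← intervalIntegral.integral_of_le (by gcongr; nlinarith)]
      exact (intervalIntegral.integral_Iic_sub_Iic integrable_abs_Wp.integrableOn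
        integrable_abs_Wp.integrableOn).symm
    simp only [hrw]
    refine Measurable.ennreal_ofReal (Measurable.const_mul ?_ _)
    exact (hΦ.measurable.comp (by fun_prop)).sub (hΦ.measurable.comp (by fun_prop))
  calc ∫⁻ y : ℝ, ENNReal.ofReal |hh a β y t|
      ≤ ∫⁻ y : ℝ, (ENNReal.ofReal
          (((Real.sqrt Real.pi)⁻¹ * (Real.sqrt (4*β))⁻¹ * (1/(2*t*Real.sqrt t)))
            * (∫ v in Set.Ioc ((y - |a| * t)/(Real.sqrt (4*β)*Real.sqrt t))
                ((y + |a| * t)/(Real.sqrt (4*β)*Real.sqrt t)), |Wp v|))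
        + ENNReal.ofReal
          (((Real.sqrt Real.pi)⁻¹ * (Real.sqrt (4*β))⁻¹ * (|a|/(Real.sqrt (4*β)*t)))
            * (|Gp ((y + a*t)/(Real.sqrt (4*β)*Real.sqrt t))| + |Gp ((y - a*t)/(Real.sqrt (4*β)*Real.sqrt t))|))) := by
        refine lintegral_mono fun y => ?_
        refine le_trans (ENNReal.ofReal_le_ofReal (hpt y)) (ENNReal.ofReal_add_le)
    _ = (∫⁻ y : ℝ, ENNReal.ofReal
          (((Real.sqrt Real.pi)⁻¹ * (Real.sqrt (4*β))⁻¹ * (1/(2*t*Real.sqrt t)))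
            * (∫ v in Set.Ioc ((y - |a| * t)/(Real.sqrt (4*β)*Real.sqrt t))
                ((y + |a| * t)/(Real.sqrt (4*β)*Real.sqrt t)), |Wp v|)))
        + ∫⁻ y : ℝ, ENNReal.ofReal
          (((Real.sqrt Real.pi)⁻¹ * (Real.sqrt (4*β))⁻¹ * (|a|/(Real.sqrt (4*β)*t)))
            * (|Gp ((y + a*t)/(Real.sqrt (4*β)*Real.sqrt t))| + |Gp ((y - a*t)/(Real.sqrt (4*β)*Real.sqrt t))|)) :=
        lintegral_add_left hmeas1 _
    _ ≤ ENNReal.ofReal (((Real.sqrt Real.pi)⁻¹ * (Real.sqrt (4*β))⁻¹ * |a| *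
          ((∫ v, |Wp v|) + 2 * (∫ v, |Gp v|))) / Real.sqrt t) := by
        have hIW : (0:ℝ) ≤ ∫ v, |Wp v| := integral_nonneg fun v => abs_nonneg _
        have hIG : (0:ℝ) ≤ ∫ v, |Gp v| := integral_nonneg fun v => abs_nonneg _
        -- Term 1
        have hT1 : (∫⁻ y : ℝ, ENNReal.ofReal
            (((Real.sqrt Real.pi)⁻¹ * (Real.sqrt (4*β))⁻¹ * (1/(2*t*Real.sqrt t)))
              * (∫ v in Set.Ioc ((y - |a| * t)/(Real.sqrt (4*β)*Real.sqrt t))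
                  ((y + |a| * t)/(Real.sqrt (4*β)*Real.sqrt t)), |Wp v|)))
            = ENNReal.ofReal ((Real.sqrt Real.pi)⁻¹ * (Real.sqrt (4*β))⁻¹ * (1/(2*t*Real.sqrt t)))
              * (ENNReal.ofReal (2*(|a| * t)) * ENNReal.ofReal (∫ v, |Wp v|)) := by
          have hpos : (0:ℝ) ≤ (Real.sqrt Real.pi)⁻¹ * (Real.sqrt (4*β))⁻¹ * (1/(2*t*Real.sqrt t)) := by
            positivity
          simp_rw [ENNReal.ofReal_mul hpos]
          rw [lintegral_const_mul' _ _ ENNReal.ofReal_ne_top]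
          rw [shift_lintegral (fun v => |Wp v|) continuous_Wp.abs (fun v => abs_nonneg _)
            integrable_abs_Wp hs' hh']
        -- Term 2
        have hint1 : Integrable (fun y : ℝ => |Gp ((y + a*t)/(Real.sqrt (4*β)*Real.sqrt t))|) :=
          (integrable_abs_Gp.comp_div hs'.ne').comp_add_right (a*t)
        have hint2 : Integrable (fun y : ℝ => |Gp ((y - a*t)/(Real.sqrt (4*β)*Real.sqrt t))|) := by
          have := (integrable_abs_Gp.comp_div hs'.ne').comp_add_right (-(a*t))
          simpa [sub_eq_add_neg] using this
        have hcomp1 : (∫ y : ℝ, |Gp ((y + a*t)/(Real.sqrt (4*β)*Real.sqrt t))|)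
            = (Real.sqrt (4*β)*Real.sqrt t) * ∫ v, |Gp v| := by
          rw [integral_add_right_eq_self (μ := volume) (fun x : ℝ => |Gp (x/(Real.sqrt (4*β)*Real.sqrt t))|) (a*t)]
          rw [MeasureTheory.Measure.integral_comp_div (fun x => |Gp x|) (Real.sqrt (4*β)*Real.sqrt t)]
          rw [smul_eq_mul, abs_of_pos hs']
        have hcomp2 : (∫ y : ℝ, |Gp ((y - a*t)/(Real.sqrt (4*β)*Real.sqrt t))|)
            = (Real.sqrt (4*β)*Real.sqrt t) * ∫ v, |Gp v| := by
          rw [integral_sub_right_eq_self (μ := volume) (fun x : ℝ => |Gp (x/(Real.sqrt (4*β)*Real.sqrt t))|) (a*t)]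
          rw [MeasureTheory.Measure.integral_comp_div (fun x => |Gp x|) (Real.sqrt (4*β)*Real.sqrt t)]
          rw [smul_eq_mul, abs_of_pos hs']
        have hT2 : (∫⁻ y : ℝ, ENNReal.ofReal
            (((Real.sqrt Real.pi)⁻¹ * (Real.sqrt (4*β))⁻¹ * (|a|/(Real.sqrt (4*β)*t)))
              * (|Gp ((y + a*t)/(Real.sqrt (4*β)*Real.sqrt t))| + |Gp ((y - a*t)/(Real.sqrt (4*β)*Real.sqrt t))|)))
            = ENNReal.ofReal (((Real.sqrt Real.pi)⁻¹ * (Real.sqrt (4*β))⁻¹ * (|a|/(Real.sqrt (4*β)*t)))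
              * (2 * ((Real.sqrt (4*β)*Real.sqrt t) * ∫ v, |Gp v|))) := by
          have hpos : (0:ℝ) ≤ (Real.sqrt Real.pi)⁻¹ * (Real.sqrt (4*β))⁻¹ * (|a|/(Real.sqrt (4*β)*t)) := by
            positivity
          simp_rw [ENNReal.ofReal_mul hpos]
          rw [lintegral_const_mul' _ _ ENNReal.ofReal_ne_top]
          congr 1
          have hsum : Integrable (fun y : ℝ => |Gp ((y + a*t)/(Real.sqrt (4*β)*Real.sqrt t))|
              + |Gp ((y - a*t)/(Real.sqrt (4*β)*Real.sqrt t))|) := hint1.add hint2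
          rw [← ofReal_integral_eq_lintegral_ofReal hsum
            (Filter.Eventually.of_forall fun y => by positivity)]
          rw [integral_add hint1 hint2, hcomp1, hcomp2]
          congr 1
          ring
        rw [hT1, hT2]
        rw [← ENNReal.ofReal_mul (by positivity), ← ENNReal.ofReal_mul (by positivity),
          ← ENNReal.ofReal_add (by positivity) (by positivity)]
        refine ENNReal.ofReal_le_ofReal (le_of_eq ?_)
        set st := Real.sqrt t with hstd
        rw [div_eq_mul_inv, ← h2]
        field_simp
  
lemma rpow_le_max (x θ : ℝ) (hx : 0 ≤ x) (h0 : 0 ≤ θ) (h1 : θ ≤ 1) : x ^ θ ≤ max 1 x := by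
  rcases le_total x 1 with h | h
  · exact le_max_of_le_left (Real.rpow_le_one hx h h0)
  · calc x ^ θ ≤ x ^ (1:ℝ) := Real.rpow_le_rpow_of_exponent_le h h1
      _ = x := Real.rpow_one x
      _ ≤ max 1 x := le_max_right _ _

theorem stmt3 (a β : ℝ) (ha : a ≠ 0) (hβ : 0 < β) (p : ℝ≥0∞) (hp : 1 ≤ p) :
    ∃ C : ℝ, 0 < C ∧ ∀ t : ℝ, 0 < t →
      eLpNorm (fun y => deriv (fun s => deriv (fun z => eFn a β z s) y) t) p volume
        ≤ ENNReal.ofReal (C * t ^ (-(1 / 2) * (1 - 1 / p.toReal) - 1 / 2)) := by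
  have ha' : (0:ℝ) < |a| := abs_pos.2 ha
  set Ci : ℝ := (Real.sqrt Real.pi)⁻¹ * (Real.sqrt (4*β))⁻¹ * (22 * |a| / Real.sqrt (4*β)) with hCidef
  set C1 : ℝ := (Real.sqrt Real.pi)⁻¹ * (Real.sqrt (4*β))⁻¹ * |a| *
      ((∫ v, |Wp v|) + 2 * (∫ v, |Gp v|)) + 1 with hC1def
  have hπ : (0:ℝ) < Real.sqrt Real.pi := Real.sqrt_pos.2 Real.pi_pos
  have hc : (0:ℝ) < Real.sqrt (4*β) := Real.sqrt_pos.2 (by positivity)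
  have hCi : (0:ℝ) < Ci := by positivity
  have hC1 : (0:ℝ) < C1 := by
    have hIW : (0:ℝ) ≤ ∫ v, |Wp v| := integral_nonneg fun v => abs_nonneg _
    have hIG : (0:ℝ) ≤ ∫ v, |Gp v| := integral_nonneg fun v => abs_nonneg _
    positivity
  refine ⟨max 1 Ci * max 1 C1, by positivity, fun t ht => ?_⟩
  have hfn : (fun y => deriv (fun s => deriv (fun z => eFn a β z s) y) t)
      = fun y => hh a β y t := funext fun y => key_deriv a β y hβ ht
  rw [hfn]
  have hst : (0:ℝ) < Real.sqrt t := Real.sqrt_pos.2 ht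
  -- L^infty bound
  have hBi : eLpNormEssSup (fun y => hh a β y t) volume ≤ ENNReal.ofReal (Ci / t) :=
    eLpNormEssSup_le_of_ae_bound (Filter.Eventually.of_forall fun y => by
      rw [Real.norm_eq_abs]; exact hh_abs_le a β hβ ht y)
  -- L^1 bound
  have hB1 : (∫⁻ y : ℝ, (‖hh a β y t‖₊ : ℝ≥0∞)) ≤ ENNReal.ofReal (C1 / Real.sqrt t) := by
    have h0 := hh_l1 a β ha hβ ht
    have e : ∀ y : ℝ, ((‖hh a β y t‖₊ : ℝ≥0∞)) = ENNReal.ofReal (|hh a β y t|) := fun y => by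
      rw [← enorm_eq_nnnorm, ← ofReal_norm, Real.norm_eq_abs]
    simp_rw [e]
    refine h0.trans (ENNReal.ofReal_le_ofReal ?_)
    rw [hC1def]
    rw [div_le_div_iff_of_pos_right hst]
    linarith
  by_cases hptop : p = ∞
  · rw [hptop, eLpNorm_exponent_top]
    refine hBi.trans (ENNReal.ofReal_le_ofReal ?_)
    have he : ((⊤:ℝ≥0∞).toReal) = 0 := ENNReal.toReal_top
    rw [he]
    norm_num
    rw [Real.rpow_neg_one]
    rw [div_eq_mul_inv]
    have hti : (0:ℝ) < t⁻¹ := by positivity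
    have h1 : Ci ≤ (1 ⊔ Ci) * (1 ⊔ C1) := by
      nlinarith [le_max_right (1:ℝ) Ci, le_max_left (1:ℝ) C1, le_max_left (1:ℝ) Ci,
        mul_le_mul_of_nonneg_left (le_max_left (1:ℝ) C1)
          (le_trans zero_le_one (le_max_left (1:ℝ) Ci))]
    exact mul_le_mul_of_nonneg_right h1 hti.le
  -- finite p
  have hq1 : 1 ≤ p.toReal := by
    rw [← ENNReal.toReal_one]
    exact ENNReal.toReal_mono hptop hp
  have hq0 : 0 < p.toReal := lt_of_lt_of_le zero_lt_one hq1
  set q := p.toReal with hqdef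
  have hθ0 : (0:ℝ) ≤ 1/q := by positivity
  have hθ1 : 1/q ≤ 1 := by
    rw [div_le_one hq0]; exact hq1
  rw [eLpNorm_eq_lintegral_rpow_enorm_toReal (zero_lt_one.trans_le hp).ne' hptop]
  have hpt : ∀ y : ℝ, ((‖hh a β y t‖₊ : ℝ≥0∞)) ^ q
      ≤ (ENNReal.ofReal (Ci/t)) ^ (q - 1) * (‖hh a β y t‖₊ : ℝ≥0∞) := by
    intro y
    have hy : ((‖hh a β y t‖₊ : ℝ≥0∞)) ≤ ENNReal.ofReal (Ci/t) := by
      rw [← enorm_eq_nnnorm, ← ofReal_norm, Real.norm_eq_abs]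
      exact ENNReal.ofReal_le_ofReal (hh_abs_le a β hβ ht y)
    calc ((‖hh a β y t‖₊ : ℝ≥0∞)) ^ q
        = ((‖hh a β y t‖₊ : ℝ≥0∞)) ^ (q - 1) * ((‖hh a β y t‖₊ : ℝ≥0∞)) ^ (1:ℝ) := by
          rw [← ENNReal.rpow_add_of_nonneg _ _ (by linarith) zero_le_one]
          norm_num
      _ ≤ (ENNReal.ofReal (Ci/t)) ^ (q - 1) * (‖hh a β y t‖₊ : ℝ≥0∞) := by
          rw [ENNReal.rpow_one]
          exact mul_le_mul' (ENNReal.rpow_le_rpow hy (by linarith)) le_rfl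
  have hmain : (∫⁻ y : ℝ, ((‖hh a β y t‖₊ : ℝ≥0∞)) ^ q)
      ≤ (ENNReal.ofReal (Ci/t)) ^ (q - 1) * ENNReal.ofReal (C1 / Real.sqrt t) := by
    calc (∫⁻ y : ℝ, ((‖hh a β y t‖₊ : ℝ≥0∞)) ^ q)
        ≤ ∫⁻ y : ℝ, (ENNReal.ofReal (Ci/t)) ^ (q - 1) * (‖hh a β y t‖₊ : ℝ≥0∞) :=
          lintegral_mono hpt
      _ = (ENNReal.ofReal (Ci/t)) ^ (q - 1) * ∫⁻ y : ℝ, (‖hh a β y t‖₊ : ℝ≥0∞) :=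
          lintegral_const_mul' _ _ (ENNReal.rpow_ne_top_of_nonneg (by linarith) ENNReal.ofReal_ne_top)
      _ ≤ (ENNReal.ofReal (Ci/t)) ^ (q - 1) * ENNReal.ofReal (C1 / Real.sqrt t) :=
          mul_le_mul' le_rfl hB1
  -- clean up RHS
  have hCit : (0:ℝ) < Ci/t := by positivity
  have hC1t : (0:ℝ) < C1/Real.sqrt t := by positivity
  refine le_trans (ENNReal.rpow_le_rpow hmain hθ0) ?_
  rw [ENNReal.mul_rpow_of_nonneg _ _ hθ0, ← ENNReal.rpow_mul,
    ENNReal.ofReal_rpow_of_pos hCit, ENNReal.ofReal_rpow_of_pos hC1t,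
    ← ENNReal.ofReal_mul (by positivity)]
  refine ENNReal.ofReal_le_ofReal ?_
  -- real inequality
  have e1 : Ci/t = Ci * t ^ (-1:ℝ) := by rw [Real.rpow_neg_one, div_eq_mul_inv]
  have e2 : C1/Real.sqrt t = C1 * t ^ (-(1/2):ℝ) := by
    rw [Real.rpow_neg ht.le, ← Real.sqrt_eq_rpow, div_eq_mul_inv]
  have hθe : (q - 1)*(1/q) = 1 - 1/q := by field_simp
  rw [hθe, e1, e2,
    Real.mul_rpow hCi.le (Real.rpow_nonneg ht.le _),
    Real.mul_rpow hC1.le (Real.rpow_nonneg ht.le _),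
    ← Real.rpow_mul ht.le, ← Real.rpow_mul ht.le,
    mul_mul_mul_comm, ← Real.rpow_add ht]
  have hE : (-1:ℝ)*(1 - 1/q) + (-(1/2))*(1/q) = -(1/2)*(1 - 1/q) - 1/2 := by ring
  rw [hE]
  refine mul_le_mul_of_nonneg_right ?_ (Real.rpow_nonneg ht.le _)
  refine mul_le_mul (rpow_le_max _ _ hCi.le (by linarith) (by linarith))
    (rpow_le_max _ _ hC1.le hθ0 hθ1) (Real.rpow_nonneg hC1.le _)
    (le_trans zero_le_one (le_max_left _ _))
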